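/- Fix n, m ∈ ℕ and identify Fin(nm) with Fin n × Fin m. Let p ∈ C_q^s(nm,2) and define π(p)(i,j|x,y) := p(0,0|(x,i),(y,j)). Then π(p) ∈ C_q^s(n,m) if and only if π(p) ∈ C_ns^s(n,m). -/

import Mathlib

open scoped ComplexOrder BigOperators

/-- A quantum representation: a finite-dimensional unital C*-algebra with a tracial
state τ and, for each experiment x : X, a projection-valued measure (E x i)_{i : Fin m}. -/
structure QRep (X : Type) (m : ℕ) where
  A : Type
  [ring : NormedRing A]
  [starRing : StarRing A]
  [cstar : CStarRing A]
  [alg : NormedAlgebra ℂ A]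
  [complete : CompleteSpace A]
  [smod : StarModule ℂ A]
  [fd : FiniteDimensional ℂ A]
  τ : A →ₗ[ℂ] ℂ
  E : X → Fin m → A
  unit : τ 1 = 1
  pos : ∀ a : A, 0 ≤ τ (star a * a)
  tracial : ∀ a b : A, τ (a * b) = τ (b * a)
  proj_sa : ∀ x i, star (E x i) = E x i
  proj_idem : ∀ x i, E x i * E x i = E x i
  pvm : ∀ x, ∑ i, E x i = 1

attribute [instance] QRep.ring QRep.starRing QRep.cstar QRep.alg
  QRep.complete QRep.smod QRep.fd

namespace QRep

variable {X : Type} {m : ℕ} (r : QRep X m)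

lemma tau_pair_zero {g : r.A} (hg : r.τ (star g * g) = 0) (x : r.A) :
    r.τ (star x * g) + r.τ (star g * x) = 0 := by
  set T := r.τ (star x * x) with hT_def
  set w := r.τ (star x * g) + r.τ (star g * x) with hw_def
  have hT := r.pos x
  have hTre : 0 ≤ T.re := (Complex.le_def.mp hT).1
  have hTim : T.im = 0 := ((Complex.le_def.mp hT).2).symm
  have key : ∀ t : ℝ, 0 ≤ T + (t : ℂ) * w := by
    intro t
    have h := r.pos (x + (t : ℂ) • g)
    have hst : star (x + (t : ℂ) • g) = star x + (t : ℂ) • star g := by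
      rw [star_add, star_smul, Complex.star_def, Complex.conj_ofReal]
    rw [hst] at h
    have hexp : (star x + (t : ℂ) • star g) * (x + (t : ℂ) • g)
        = star x * x + (t : ℂ) • (star x * g) + (t : ℂ) • (star g * x)
          + ((t : ℂ) * (t : ℂ)) • (star g * g) := by
      simp only [mul_add, add_mul, smul_mul_assoc, mul_smul_comm, smul_smul, smul_add]
      abel
    rw [hexp, map_add, map_add, map_add, map_smul, map_smul, map_smul, hg, smul_zero,
      add_zero, smul_eq_mul, smul_eq_mul] at h
    calc (0:ℂ) ≤ _ := h
    _ = T + (t:ℂ) * w := by rw [hw_def, hT_def]; ring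
  have him : w.im = 0 := by
    have h1 := (Complex.le_def.mp (key 1)).2
    simp only [Complex.add_im, Complex.mul_im, Complex.ofReal_re, Complex.ofReal_im,
      Complex.zero_im, hTim] at h1
    linarith [h1.symm]
  have hre : w.re = 0 := by
    by_contra h0
    have h1 := (Complex.le_def.mp (key (-(T.re + 1) / w.re))).1
    simp only [Complex.add_re, Complex.mul_re, Complex.ofReal_re, Complex.ofReal_im,
      Complex.zero_re, him] at h1
    rw [div_mul_cancel₀ _ h0] at h1
    linarith
  have : w = 0 := by
    apply Complex.ext <;> simp [hre, him]
  exact this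

end QRep

namespace QRep

variable {X : Type} {m : ℕ} (r : QRep X m)

lemma tau_mul_null {g : r.A} (hg : r.τ (star g * g) = 0) (b : r.A) :
    r.τ (b * g) = 0 := by
  have h1 := r.tau_pair_zero hg (star b)
  rw [star_star] at h1
  have h2 := r.tau_pair_zero hg (Complex.I • star b)
  rw [star_smul, star_star, Complex.star_def, Complex.conj_I, neg_smul, neg_mul,
    smul_mul_assoc, mul_smul_comm, map_neg, map_smul, map_smul, smul_eq_mul, smul_eq_mul] at h2
  set u := r.τ (b * g)
  set v := r.τ (star g * star b)
  have h3 : u = v := by linear_combination Complex.I * h2 + (u - v) * Complex.I_sq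
  linear_combination h1 / 2 + h3 / 2

def nullIdeal : Submodule ℂ r.A where
  carrier := {a | ∀ b, r.τ (b * a) = 0}
  add_mem' := fun {a b} ha hb c => by rw [mul_add, map_add, ha c, hb c, add_zero]
  zero_mem' := fun c => by rw [mul_zero, map_zero]
  smul_mem' := fun c a ha b => by rw [mul_smul_comm, map_smul, ha b, smul_zero]

lemma mem_nullIdeal_of_null {g : r.A} (hg : r.τ (star g * g) = 0) :
    g ∈ r.nullIdeal := fun b => r.tau_mul_null hg b

lemma nullIdeal_mul_left {a : r.A} (ha : a ∈ r.nullIdeal) (b : r.A) :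
    b * a ∈ r.nullIdeal := fun c => by rw [← mul_assoc]; exact ha _

lemma nullIdeal_mul_right {a : r.A} (ha : a ∈ r.nullIdeal) (b : r.A) :
    a * b ∈ r.nullIdeal := fun c => by
  rw [← mul_assoc, r.tracial, ← mul_assoc]; exact ha _

lemma tau_nullIdeal {a : r.A} (ha : a ∈ r.nullIdeal) : r.τ a = 0 := by
  simpa using ha 1

lemma spectrum_finite (a : r.A) : (spectrum ℂ a).Finite := by
  haveI : Nontrivial r.A := by
    refine nontrivial_of_ne 1 0 fun h => ?_
    have h2 := r.unit
    rw [h, map_zero] at h2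
    exact one_ne_zero h2.symm
  haveI : Algebra.IsIntegral ℂ r.A := Algebra.IsIntegral.of_finite ℂ r.A
  have hint : IsIntegral ℂ a := Algebra.IsIntegral.isIntegral a
  have hmp : minpoly ℂ a ≠ 0 := minpoly.ne_zero hint
  have h0 : Polynomial.aeval a (minpoly ℂ a) = 0 := minpoly.aeval ℂ a
  apply Set.Finite.subset (Polynomial.finite_setOf_isRoot hmp)
  intro z hz
  have h2 := spectrum.subset_polynomial_aeval a (minpoly ℂ a) ⟨z, hz, rfl⟩
  rw [h0, spectrum.zero_eq] at h2
  simpa [Polynomial.IsRoot] using h2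

end QRep

namespace QRep

variable {X : Type} {m : ℕ}

lemma exists_unit (r : QRep X m) : ∃ e : r.A, e ∈ r.nullIdeal ∧ star e = e ∧ e * e = e ∧
    (∀ nn ∈ r.nullIdeal, nn * (1 - e) = 0 ∧ (1 - e) * nn = 0) ∧
    (∀ b : r.A, e * b = b * e) := by
  classical
  letI : CStarAlgebra r.A := { }
  letI : PartialOrder r.A := CStarAlgebra.spectralOrder _
  haveI : StarOrderedRing r.A := CStarAlgebra.spectralOrderedRing _
  set N := r.nullIdeal with hN_def
  haveI : FiniteDimensional ℂ N := FiniteDimensional.finiteDimensional_submodule N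
  set bN := Module.finBasis ℂ N with hbN_def
  set a : r.A := ∑ k, (star (bN k : r.A) * (bN k : r.A) + (bN k : r.A) * star (bN k : r.A))
    with ha_def
  have ha_sa : IsSelfAdjoint a := by
    rw [IsSelfAdjoint, ha_def, star_sum]
    exact Finset.sum_congr rfl fun k _ => by
      rw [star_add, star_mul, star_mul, star_star]
  have ha_mem : a ∈ N := Submodule.sum_mem _ fun k _ => Submodule.add_mem _
    (r.nullIdeal_mul_left (bN k).2 _) (r.nullIdeal_mul_right (bN k).2 _)
  have hfin := r.spectrum_finite a
  haveI han : IsStarNormal a := ha_sa.isStarNormal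
  set f : ℂ → ℂ := fun z => if z = 0 then 0 else 1 with hf_def
  have hfc : ContinuousOn f (spectrum ℂ a) := hfin.continuousOn f
  set e := cfc f a with he_def
  have he_sa : star e = e := by
    have h1 : (fun z => star (f z)) = f := by
      funext z; by_cases hz : z = 0 <;> simp [hf_def, hz]
    rw [he_def, ← cfc_star, h1]
  have he_idem : e * e = e := by
    rw [he_def, ← cfc_mul f f a hfc hfc]
    congr 1
    funext z; by_cases hz : z = 0 <;> simp [hf_def, hz]
  have hae : a * e = a := by
    conv_lhs => rw [← cfc_id' ℂ a, he_def]
    rw [← cfc_mul (fun z : ℂ => z) f a continuous_id.continuousOn hfc]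
    rw [show (fun z : ℂ => z * f z) = fun z => z by
      funext z; by_cases hz : z = 0 <;> simp [hf_def, hz]]
    exact cfc_id' ℂ a
  have he_mem : e ∈ N := by
    set s : Finset ℂ := insert 0 hfin.toFinset with hs_def
    set P : Polynomial ℂ := Lagrange.interpolate s id f with hP_def
    have hPeval : ∀ z ∈ s, P.eval z = f z := fun z hz =>
      Lagrange.eval_interpolate_at_node f (Set.injOn_id _) hz
    have he_poly : e = Polynomial.aeval a P := by
      have h1 : e = cfc (fun z => P.eval z) a := by
        apply cfc_congr
        intro z hz
        exact (hPeval z (Finset.mem_insert_of_mem (hfin.mem_toFinset.mpr hz))).symm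
      rw [h1]
      exact cfc_polynomial P a
    have h0 : P.eval 0 = 0 := by rw [hPeval 0 (Finset.mem_insert_self _ _)]; simp [hf_def]
    obtain ⟨Q, hQ⟩ : Polynomial.X ∣ P := Polynomial.X_dvd_iff.mpr
      (by rw [Polynomial.coeff_zero_eq_eval_zero, h0])
    rw [he_poly, hQ, map_mul, Polynomial.aeval_X]
    exact r.nullIdeal_mul_right ha_mem _
  -- the annihilation property
  set w : r.A := 1 - e with hw_def
  have hw_sa : star w = w := by rw [hw_def, star_sub, star_one, he_sa]
  have haw : a * w = 0 := by rw [hw_def, mul_sub, mul_one, hae, sub_self]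
  have hwa : w * a = 0 := by
    have := congrArg star haw
    rwa [star_mul, hw_sa, ha_sa.star_eq, star_zero] at this
  have hwaw : w * a * w = 0 := by rw [mul_assoc, haw, mul_zero]
  have hbasis : ∀ k, (bN k : r.A) * w = 0 ∧ w * (bN k : r.A) = 0 := by
    have hsum : ∑ k, (star ((bN k : r.A) * w) * ((bN k : r.A) * w)
        + star (star (bN k : r.A) * w) * (star (bN k : r.A) * w)) = 0 := by
      rw [← hwaw, ha_def, Finset.mul_sum, Finset.sum_mul]
      refine Finset.sum_congr rfl fun k _ => ?_
      rw [star_mul, star_mul, hw_sa, star_star]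
      noncomm_ring
    have hterm : ∀ k ∈ Finset.univ, (0:r.A) ≤ star ((bN k : r.A) * w) * ((bN k : r.A) * w)
        + star (star (bN k : r.A) * w) * (star (bN k : r.A) * w) :=
      fun k _ => add_nonneg (star_mul_self_nonneg _) (star_mul_self_nonneg _)
    have hzero := (Finset.sum_eq_zero_iff_of_nonneg hterm).mp hsum
    intro k
    have hk := hzero k (Finset.mem_univ k)
    have h1 : star ((bN k : r.A) * w) * ((bN k : r.A) * w) = 0 := by
      refine le_antisymm ?_ (star_mul_self_nonneg _)
      calc star ((bN k : r.A) * w) * ((bN k : r.A) * w)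
          ≤ star ((bN k : r.A) * w) * ((bN k : r.A) * w)
            + star (star (bN k : r.A) * w) * (star (bN k : r.A) * w) :=
            le_add_of_nonneg_right (star_mul_self_nonneg _)
        _ = 0 := hk
    have h2 : star (star (bN k : r.A) * w) * (star (bN k : r.A) * w) = 0 := by
      refine le_antisymm ?_ (star_mul_self_nonneg _)
      calc star (star (bN k : r.A) * w) * (star (bN k : r.A) * w)
          ≤ _ + _ := le_add_of_nonneg_left (star_mul_self_nonneg _)
        _ = 0 := hk
    have h1' : (bN k : r.A) * w = 0 := (CStarRing.star_mul_self_eq_zero_iff _).mp h1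
    have h2' : star (bN k : r.A) * w = 0 := (CStarRing.star_mul_self_eq_zero_iff _).mp h2
    refine ⟨h1', ?_⟩
    have := congrArg star h2'
    rwa [star_mul, hw_sa, star_star, star_zero] at this
  have hann : ∀ nn ∈ N, nn * w = 0 ∧ w * nn = 0 := by
    intro nn hnn
    have hrepr := bN.sum_repr ⟨nn, hnn⟩
    have hrepr' : (∑ k, bN.repr ⟨nn, hnn⟩ k • (bN k : r.A)) = nn := by
      have := congrArg (Submodule.subtype N) hrepr
      rw [map_sum] at this
      simpa only [map_smul, Submodule.subtype_apply, Submodule.coe_mk] using this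
    constructor
    · rw [← hrepr', Finset.sum_mul]
      refine Finset.sum_eq_zero fun k _ => ?_
      rw [smul_mul_assoc, (hbasis k).1, smul_zero]
    · rw [← hrepr', Finset.mul_sum]
      refine Finset.sum_eq_zero fun k _ => ?_
      rw [mul_smul_comm, (hbasis k).2, smul_zero]
  have hcomm : ∀ b : r.A, e * b = b * e := by
    intro b
    have h3 := (hann _ (r.nullIdeal_mul_left he_mem b)).2
    have h4 := (hann _ (r.nullIdeal_mul_right he_mem b)).1
    rw [hw_def, sub_mul, one_mul, sub_eq_zero] at h3
    rw [hw_def, mul_sub, mul_one, sub_eq_zero] at h4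
    calc e * b = e * b * e := h4
      _ = e * (b * e) := by rw [mul_assoc]
      _ = b * e := h3.symm
  exact ⟨e, he_mem, he_sa, he_idem, hann, hcomm⟩

end QRep

/-- Membership in the synchronous quantum correlation set C_q^s:
`p x y i j` denotes p(i,j|x,y). -/
def IsQSyncCorrelation {X : Type} (m : ℕ) (p : X → X → Fin m → Fin m → ℝ) : Prop :=
  ∃ r : QRep X m, ∀ x y i j, (p x y i j : ℂ) = r.τ (r.E x i * r.E y j)

/-- Membership in the synchronous non-signaling correlation set C_ns^s. -/
def IsSyncNSCorrelation {X : Type} [Fintype X] (m : ℕ)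
    (p : X → X → Fin m → Fin m → ℝ) : Prop :=
  (∀ x y i j, 0 ≤ p x y i j) ∧
  (∀ x y, ∑ i, ∑ j, p x y i j = 1) ∧
  (∀ x i j, i ≠ j → p x x i j = 0) ∧
  (∀ x y y' i, ∑ j, p x y i j = ∑ j, p x y' i j) ∧
  (∀ x x' y j, ∑ i, p x y i j = ∑ i, p x' y i j)

/-- identifying Fin (nm) with Fin n × Fin m, for p ∈ C_q^s(nm,2) and
π(p)(i,j|x,y) := p(0,0|(x,i),(y,j)), we have π(p) ∈ C_q^s(n,m) ↔ π(p) ∈ C_ns^s(n,m). -/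
theorem stmt8 (n m : ℕ)
    (p : (Fin n × Fin m) → (Fin n × Fin m) → Fin 2 → Fin 2 → ℝ)
    (hp : IsQSyncCorrelation 2 p) :
    IsQSyncCorrelation m (fun x y i j => p (x, i) (y, j) 0 0) ↔
      IsSyncNSCorrelation m (fun x y i j => p (x, i) (y, j) 0 0) := by
  constructor
  · rintro ⟨r, hr⟩
    have nonnegC : ∀ (x y : Fin n) (i j : Fin m), (0:ℂ) ≤ r.τ (r.E x i * r.E y j) := by
      intro x y i j
      have key : r.τ (star (r.E y j * r.E x i) * (r.E y j * r.E x i))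
          = r.τ (r.E x i * r.E y j) := by
        rw [star_mul, r.proj_sa, r.proj_sa]
        have h1 : r.E x i * r.E y j * (r.E y j * r.E x i) = r.E x i * r.E y j * r.E x i := by
          rw [mul_assoc, ← mul_assoc (r.E y j), r.proj_idem, ← mul_assoc]
        rw [h1, r.tracial, ← mul_assoc, r.proj_idem, r.tracial]
      rw [← key]; exact r.pos _
    have nonnegR : ∀ (x y : Fin n) (i j : Fin m), 0 ≤ p (x, i) (y, j) 0 0 := by
      intro x y i j
      have h := nonnegC x y i j
      rw [← hr] at h
      exact Complex.zero_le_real.mp h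
    have rowsum : ∀ (x y : Fin n) (i : Fin m),
        ((∑ j, p (x, i) (y, j) 0 0 : ℝ) : ℂ) = r.τ (r.E x i) := by
      intro x y i
      rw [Complex.ofReal_sum]
      calc ∑ j, ((p (x, i) (y, j) 0 0 : ℝ) : ℂ) = ∑ j, r.τ (r.E x i * r.E y j) :=
            Finset.sum_congr rfl fun j _ => hr x y i j
        _ = r.τ (r.E x i * ∑ j, r.E y j) := by rw [Finset.mul_sum, map_sum]
        _ = r.τ (r.E x i) := by rw [r.pvm, mul_one]
    have colsum : ∀ (x y : Fin n) (j : Fin m),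
        ((∑ i, p (x, i) (y, j) 0 0 : ℝ) : ℂ) = r.τ (r.E y j) := by
      intro x y j
      rw [Complex.ofReal_sum]
      calc ∑ i, ((p (x, i) (y, j) 0 0 : ℝ) : ℂ) = ∑ i, r.τ (r.E x i * r.E y j) :=
            Finset.sum_congr rfl fun i _ => hr x y i j
        _ = r.τ ((∑ i, r.E x i) * r.E y j) := by rw [Finset.sum_mul, map_sum]
        _ = r.τ (r.E y j) := by rw [r.pvm, one_mul]
    refine ⟨fun x y i j => nonnegR x y i j, ?_, ?_, ?_, ?_⟩
    · intro x y
      apply Complex.ofReal_inj.mp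
      rw [Complex.ofReal_sum, Complex.ofReal_one]
      calc ∑ i, ((∑ j, p (x, i) (y, j) 0 0 : ℝ) : ℂ) = ∑ i, r.τ (r.E x i) :=
            Finset.sum_congr rfl fun i _ => rowsum x y i
        _ = r.τ (∑ i, r.E x i) := (map_sum _ _ _).symm
        _ = 1 := by rw [r.pvm, r.unit]
    · intro x i j hij
      have hdiag : p (x, i) (x, i) 0 0 = ∑ j', p (x, i) (x, j') 0 0 := by
        apply Complex.ofReal_inj.mp
        rw [rowsum x x i, hr x x i i, r.proj_idem]
      have hzero : ∑ j' ∈ Finset.univ.erase i, p (x, i) (x, j') 0 0 = 0 := by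
        rw [Finset.sum_erase_eq_sub (Finset.mem_univ i), ← hdiag, sub_self]
      exact (Finset.sum_eq_zero_iff_of_nonneg
        (fun j' _ => nonnegR x x i j')).mp hzero j
        (Finset.mem_erase.mpr ⟨Ne.symm hij, Finset.mem_univ j⟩)
    · intro x y y' i
      apply Complex.ofReal_inj.mp
      rw [rowsum x y i, rowsum x y' i]
    · intro x x' y j
      apply Complex.ofReal_inj.mp
      rw [colsum x y j, colsum x' y j]
  · rintro ⟨h1, h2, h3, h4, h5⟩
    clear h1 h4 h5
    rcases isEmpty_or_nonempty (Fin m) with hm | hm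
    · rcases isEmpty_or_nonempty (Fin n) with hn | hn
      · refine ⟨{ A := ℂ
                  τ := LinearMap.id
                  E := fun x => hn.elim x
                  unit := rfl
                  pos := fun a => star_mul_self_nonneg a
                  tracial := fun a b => mul_comm a b
                  proj_sa := fun x => hn.elim x
                  proj_idem := fun x => hn.elim x
                  pvm := fun x => hn.elim x }, fun x => hn.elim x⟩
      · exfalso
        have := h2 (Classical.arbitrary _) (Classical.arbitrary _)
        rw [Finset.univ_eq_empty, Finset.sum_empty] at this
        exact zero_ne_one this
    · -- main construction
      obtain ⟨r, hr⟩ := hp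
      obtain ⟨e, he_mem, he_sa, he_idem, hann, hcomm⟩ := r.exists_unit
      set w : r.A := 1 - e with hw_def
      have hw_sa : star w = w := by rw [hw_def, star_sub, star_one, he_sa]
      have hwe : w * e = 0 := by rw [hw_def, sub_mul, one_mul, he_idem, sub_self]
      have hew : e * w = 0 := by rw [hw_def, mul_sub, mul_one, he_idem, sub_self]
      have hww : w * w = w := by
        have h' : (1 - e) * (1 - e) = 1 - e - (e - e * e) := by noncomm_ring
        rw [hw_def, h', he_idem, sub_self, sub_zero]
      have hcommw : ∀ b : r.A, w * b = b * w := by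
        intro b
        rw [hw_def, sub_mul, mul_sub, one_mul, mul_one, hcomm]
      set F : Fin n → Fin m → r.A := fun x i => r.E (x, i) 0 with hF_def
      have hFp : ∀ x y i j, (p (x, i) (y, j) 0 0 : ℂ) = r.τ (F x i * F y j) :=
        fun x y i j => hr (x, i) (y, j) 0 0
      have hFsa : ∀ x i, star (F x i) = F x i := fun x i => r.proj_sa (x, i) 0
      have hFidem : ∀ x i, F x i * F x i = F x i := fun x i => r.proj_idem (x, i) 0
      have hsync : ∀ (x : Fin n) (i j : Fin m), i ≠ j → r.τ (F x i * F x j) = 0 := by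
        intro x i j hij
        have hc : p (x, i) (x, j) 0 0 = 0 := h3 x i j hij
        rw [← hFp x x i j, hc, Complex.ofReal_zero]
      have hsum2 : ∀ x : Fin n, ∑ i, ∑ j, r.τ (F x i * F x j) = 1 := by
        intro x
        have hc : ∑ i, ∑ j, p (x, i) (x, j) 0 0 = 1 := h2 x x
        calc ∑ i, ∑ j, r.τ (F x i * F x j)
            = ∑ i, ∑ j, ((p (x, i) (x, j) 0 0 : ℝ) : ℂ) :=
              Finset.sum_congr rfl fun i _ => Finset.sum_congr rfl fun j _ => (hFp x x i j).symm
          _ = ((∑ i, ∑ j, p (x, i) (x, j) 0 0 : ℝ) : ℂ) := by push_cast; ring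
          _ = 1 := by rw [hc, Complex.ofReal_one]
      set S : Fin n → r.A := fun x => ∑ i, F x i with hS_def
      have htauS : ∀ x, r.τ (S x) = 1 := by
        intro x
        have hstep : r.τ (S x) = ∑ i, ∑ j, r.τ (F x i * F x j) := by
          rw [hS_def, map_sum]
          refine Finset.sum_congr rfl fun i _ => ?_
          rw [Finset.sum_eq_single i (fun j _ hj => hsync x i j (Ne.symm hj))
            (fun h => absurd (Finset.mem_univ i) h), hFidem]
        rw [hstep, hsum2]
      have htauSS : ∀ x, r.τ (S x * S x) = 1 := by
        intro x
        rw [hS_def]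
        simp only [Finset.sum_mul, Finset.mul_sum, map_sum]
        rw [Finset.sum_comm]
        exact hsum2 x
      have hs_mem : ∀ x, (S x - 1) ∈ r.nullIdeal := by
        intro x
        apply r.mem_nullIdeal_of_null
        have hsa : star (S x - 1) = S x - 1 := by
          rw [star_sub, star_one, hS_def]
          congr 1
          rw [star_sum]
          exact Finset.sum_congr rfl fun i _ => hFsa x i
        have hexp : (S x - 1) * (S x - 1) = S x * S x - S x - S x + 1 := by noncomm_ring
        rw [hsa, hexp, map_add, map_sub, map_sub, htauSS, htauS, r.unit]
        ring
      set i0 : Fin m := hm.some with hi0_def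
      set Enew : Fin n → Fin m → r.A :=
        fun x i => (if i = i0 then e else 0) + w * F x i with hE_def
      have hewG : ∀ g : r.A, e * (w * g) = 0 := fun g => by rw [← mul_assoc, hew, zero_mul]
      have hwFe : ∀ g : r.A, (w * g) * e = 0 := fun g => by
        rw [mul_assoc, ← hcomm g, ← mul_assoc, hwe, zero_mul]
      have hwFwG : ∀ g g' : r.A, (w * g) * (w * g') = w * (g * g') := by
        intro g g'
        rw [mul_assoc w g, ← mul_assoc g w, ← hcommw g, ← mul_assoc, ← mul_assoc, hww,
          mul_assoc]
      have hkey : ∀ x y i j, r.τ (Enew x i * Enew y j) = r.τ (F x i * F y j) := by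
        intro x y i j
        have hexp : Enew x i * Enew y j
            = (if i = i0 then e else 0) * (if j = i0 then e else 0)
              + (if i = i0 then e else 0) * (w * F y j)
              + (w * F x i) * (if j = i0 then e else 0)
              + (w * F x i) * (w * F y j) := by
          simp only [hE_def]
          noncomm_ring
        have hc1 : (if i = i0 then e else 0) * (w * F y j) = 0 := by
          split
          · exact hewG _
          · rw [zero_mul]
        have hc2 : (w * F x i) * (if j = i0 then e else 0) = 0 := by
          split
          · exact hwFe _
          · rw [mul_zero]
        have hc3 : r.τ ((if i = i0 then e else 0) * (if j = i0 then e else 0)) = 0 := by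
          by_cases hi : i = i0 <;> by_cases hj : j = i0 <;>
            simp [hi, hj, he_idem, r.tau_nullIdeal he_mem]
        rw [hexp, map_add, map_add, map_add, hc1, hc2, map_zero, add_zero, add_zero, hc3,
          zero_add, hwFwG]
        rw [hw_def, sub_mul, one_mul, map_sub,
          r.tau_nullIdeal (r.nullIdeal_mul_right he_mem _), sub_zero]
      refine ⟨{ A := r.A
                τ := r.τ
                E := Enew
                unit := r.unit
                pos := r.pos
                tracial := r.tracial
                proj_sa := ?_
                proj_idem := ?_
                pvm := ?_ }, ?_⟩
      · intro x i
        rw [hE_def]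
        simp only
        rw [star_add, star_mul, hw_sa, hFsa, hcommw]
        congr 1
        split <;> simp [he_sa]
      · intro x i
        rw [hE_def]
        simp only
        rw [add_mul, mul_add, mul_add]
        have hd : (if i = i0 then e else 0) * (if i = i0 then e else 0)
            = (if i = i0 then e else 0) := by split <;> simp [he_idem]
        have hc1 : (if i = i0 then e else 0) * (w * F x i) = 0 := by
          split
          · exact hewG _
          · rw [zero_mul]
        have hc2 : (w * F x i) * (if i = i0 then e else 0) = 0 := by
          split
          · exact hwFe _
          · rw [mul_zero]
        rw [hd, hc1, hc2, hwFwG, hFidem, add_zero, zero_add]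
      · intro x
        rw [hE_def]
        simp only
        rw [Finset.sum_add_distrib, Finset.sum_ite_eq' Finset.univ i0 (fun _ => e),
          if_pos (Finset.mem_univ i0), ← Finset.mul_sum]
        have hws : w * S x = w := by
          have h' : S x = 1 + (S x - 1) := by abel
          rw [h', mul_add, mul_one, (hann _ (hs_mem x)).2, add_zero]
        have hSx : ∑ i, F x i = S x := rfl
        rw [hSx, hws, hw_def]
        abel
      · intro x y i j
        simp only
        rw [hkey x y i j]
        exact hFp x y i j
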